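/- Let s ≥ 1 be an integer, and let A ⊂ ℝ^m be an H^s-measurable set with 0 < H^s(A) < ∞. Suppose that for every x ∈ A there exists a sequence of radii r_n → 0⁺ such that A ∩ B(x, 2r_n) = A ∩ B(x, r_n) for every n. Then A is not s-rectifiable. -/

import Mathlib

open Set MeasureTheory Metric Filter
open scoped ENNReal NNReal Topology Pointwise

set_option maxHeartbeats 1000000

namespace Stmt14Aux

lemma hausdorff_eq_volume (s : ℕ) : (μH[(s:ℝ)] : Measure (Fin s → ℝ)) = volume := by
  have := MeasureTheory.hausdorffMeasure_pi_real (ι := Fin s)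
  simpa using this

lemma image_null {s m : ℕ} {f : (Fin s → ℝ) → (Fin m → ℝ)} {K : ℝ≥0} (hf : LipschitzWith K f)
    {N : Set (Fin s → ℝ)} (hN : volume N = 0) : μH[(s:ℝ)] (f '' N) = 0 := by
  have h := hf.hausdorffMeasure_image_le (d := (s:ℝ)) (by positivity) N
  rw [hausdorff_eq_volume, hN, mul_zero] at h
  exact le_antisymm h zero_le

lemma grid_cover (k : ℕ) (j : Fin k) {R η : ℝ} (hR : 0 < R) (hη : 0 < η) :
    ∃ G : Finset (Fin k → ℝ), G.card ≤ (⌈R/η⌉₊ + 1)^(k-1) ∧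
      ∀ w : Fin k → ℝ, ‖w‖ ≤ R → w j = 0 → ∃ g ∈ G, ‖w - g‖ ≤ 2*η := by
  classical
  set M := ⌈R/η⌉₊ with hM
  set T : Finset ℝ := (Finset.range (M+1)).image (fun n : ℕ => -R + 2*η*(n:ℝ)) with hT
  refine ⟨Fintype.piFinset (fun i => if i = j then {0} else T), ?_, ?_⟩
  · rw [Fintype.card_piFinset]
    calc ∏ i, (if i = j then ({0}:Finset ℝ) else T).card
        ≤ ∏ i, (if i = j then 1 else M+1) := by
          apply Finset.prod_le_prod'
          intro i _
          by_cases h : i = j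
          · simp [h]
          · simp only [if_neg h]
            exact (Finset.card_image_le).trans (by simp)
      _ = (M+1)^(k-1) := by
          rw [← Finset.mul_prod_erase Finset.univ _ (Finset.mem_univ j)]
          simp only [if_pos rfl, one_mul]
          rw [Finset.prod_congr rfl (fun i hi => if_neg (Finset.ne_of_mem_erase hi)),
            Finset.prod_const, Finset.card_erase_of_mem (Finset.mem_univ j), Finset.card_univ,
            Fintype.card_fin]
          simp
  · intro w hw hwj
    set g : Fin k → ℝ := fun i => if i = j then 0 else -R + 2*η*⌊(w i + R)/(2*η)⌋₊ with hg
    have h2η : (0:ℝ) < 2*η := by linarith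
    have hmem : ∀ i, |w i| ≤ R := fun i => (norm_le_pi_norm w i).trans hw
    refine ⟨g, ?_, ?_⟩
    · rw [Fintype.mem_piFinset]
      intro i
      by_cases h : i = j
      · simp [hg, h]
      · simp only [hg, if_neg h, hT, Finset.mem_image, Finset.mem_range]
        refine ⟨⌊(w i + R)/(2*η)⌋₊, ?_, rfl⟩
        have h1 : (w i + R)/(2*η) ≤ R/η := by
          rw [div_le_div_iff₀ h2η hη]
          have := (abs_le.1 (hmem i)).2
          nlinarith
        calc ⌊(w i + R)/(2*η)⌋₊ ≤ ⌊R/η⌋₊ := Nat.floor_mono h1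
          _ < M + 1 := Nat.lt_succ_of_le (Nat.floor_le_ceil _)
    · have : ∀ i, |w i - g i| ≤ 2*η := by
        intro i
        by_cases h : i = j
        · simp [hg, h, hwj, h2η.le]
        · simp only [hg, if_neg h]
          have ha : (0:ℝ) ≤ w i + R := by
            have := (abs_le.1 (hmem i)).1; linarith
          have hfl : 2*η*⌊(w i + R)/(2*η)⌋₊ ≤ w i + R := by
            rw [mul_comm]
            calc (⌊(w i + R)/(2*η)⌋₊ : ℝ) * (2*η) ≤ ((w i + R)/(2*η)) * (2*η) := by
                  apply mul_le_mul_of_nonneg_right (Nat.floor_le (by positivity)) h2η.le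
              _ = w i + R := div_mul_cancel₀ _ h2η.ne'
          have hfl2 : w i + R < 2*η*(⌊(w i + R)/(2*η)⌋₊ + 1) := by
            have := Nat.lt_floor_add_one ((w i + R)/(2*η))
            calc w i + R = ((w i + R)/(2*η)) * (2*η) := (div_mul_cancel₀ _ h2η.ne').symm
              _ < (⌊(w i + R)/(2*η)⌋₊ + 1) * (2*η) := by
                  apply mul_lt_mul_of_pos_right this h2η
              _ = 2*η*(⌊(w i + R)/(2*η)⌋₊ + 1) := by ring
          rw [abs_le]
          constructor <;> nlinarith
      apply (pi_norm_le_iff_of_nonneg (by positivity)).2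
      intro i
      simpa [Real.norm_eq_abs] using this i

lemma slab_cover {s m : ℕ} (hs : 1 ≤ s) {f : (Fin s → ℝ) → (Fin m → ℝ)} {K : ℝ≥0}
    (hf : LipschitzWith K f) {y : Fin s → ℝ} {L : (Fin s → ℝ) →L[ℝ] (Fin m → ℝ)}
    (hd : HasFDerivAt f L y) (hL : ¬ Function.Injective L) {ε : ℝ} (hε : 0 < ε)
    (hGrid : ∀ (j : Fin s) {R η : ℝ}, 0 < R → 0 < η →
      ∃ G : Finset (Fin s → ℝ), G.card ≤ (⌈R/η⌉₊ + 1)^(s-1) ∧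
      ∀ w : Fin s → ℝ, ‖w‖ ≤ R → w j = 0 → ∃ g ∈ G, ‖w - g‖ ≤ 2*η) :
    ∃ δ₀ > 0, ∀ δ : ℝ, 0 < δ → δ ≤ δ₀ →
      ∃ c : ℕ → Set (Fin m → ℝ),
        (f '' closedBall y δ ⊆ ⋃ n, c n) ∧
        (∀ n, EMetric.diam (c n) ≤ ENNReal.ofReal (ε * δ)) ∧
        (∑' n, EMetric.diam (c n) ^ (s:ℝ)) ≤ ENNReal.ofReal ε * volume (closedBall y δ) := by
  classical
  -- kernel vector with u j = 1
  obtain ⟨a₀, b₀, hab, hne⟩ := Function.not_injective_iff.1 hL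
  obtain ⟨j, hj⟩ := Function.ne_iff.1 (sub_ne_zero.2 hne)
  set u : Fin s → ℝ := ((a₀ - b₀) j)⁻¹ • (a₀ - b₀) with hu
  have hLu : L u = 0 := by
    rw [hu, _root_.map_smul]
    have h0 : L (a₀ - b₀) = 0 := by rw [map_sub, hab, sub_self]
    rw [h0, smul_zero]
  have huj : u j = 1 := by
    simp only [hu, Pi.smul_apply, smul_eq_mul]
    exact inv_mul_cancel₀ (by simpa using hj)
  set cu := ‖u‖ with hcu
  have hcu1 : 1 ≤ cu := by
    calc (1:ℝ) = ‖u j‖ := by rw [huj]; simp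
      _ ≤ ‖u‖ := norm_le_pi_norm u j
  have hcupos : 0 < cu := lt_of_lt_of_le one_pos hcu1
  set Kr : ℝ := (K : ℝ) with hKr
  have hKr0 : 0 ≤ Kr := K.coe_nonneg
  set C1 : ℝ := 2*Kr + 9*cu with hC1
  have hC1pos : 0 < C1 := by rw [hC1]; linarith
  set C2 : ℝ := (4*cu)^(s-1) * (2*C1)^s with hC2
  have hC2pos : 0 < C2 := by
    rw [hC2]
    exact mul_pos (pow_pos (by linarith) _) (pow_pos (by linarith) _)
  set ε₁ : ℝ := min cu (min (ε/(2*C1)) (ε * 2^s / C2)) with hε₁def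
  have hε₁pos : 0 < ε₁ :=
    lt_min hcupos (lt_min (div_pos hε (by linarith)) (div_pos (mul_pos hε (by norm_num)) hC2pos))
  have hε₁cu : ε₁ ≤ cu := min_le_left _ _
  have hε₁a : 2*C1*ε₁ ≤ ε := by
    have h' : ε₁ ≤ ε/(2*C1) := le_trans (min_le_right _ _) (min_le_left _ _)
    rw [le_div_iff₀ (by linarith : (0:ℝ) < 2*C1)] at h'
    linarith
  have hε₁c : C2 * ε₁ ≤ ε * 2^s := by
    have h' : ε₁ ≤ ε * 2^s / C2 := (min_le_right _ _).trans (min_le_right _ _)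
    rw [le_div_iff₀ hC2pos] at h'
    linarith
  -- derivative estimate
  have hlo : ∀ᶠ z in 𝓝 y, ‖f z - f y - L (z - y)‖ ≤ ε₁ * ‖z - y‖ := by
    have h := hd.isLittleO
    simpa using Asymptotics.isLittleO_iff.1 h hε₁pos
  obtain ⟨δ₁, hδ₁pos, hδ₁⟩ := Metric.eventually_nhds_iff.1 hlo
  refine ⟨δ₁ / (6*cu), div_pos hδ₁pos (by linarith), ?_⟩
  intro δ hδpos hδle
  have hδ6 : 6*cu*δ ≤ δ₁ := by
    rw [le_div_iff₀ (by linarith : (0:ℝ) < 6*cu)] at hδle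
    linarith
  obtain ⟨G, hGcard, hGcov⟩ := hGrid j (by nlinarith : (0:ℝ) < 2*cu*δ)
    (mul_pos hε₁pos hδpos)
  set ρ : ℝ := C1*ε₁*δ with hρ
  have hρpos : 0 < ρ := by rw [hρ]; exact mul_pos (mul_pos hC1pos hε₁pos) hδpos
  set l := G.toList with hl
  set c : ℕ → Set (Fin m → ℝ) :=
    fun n => if h : n < l.length then closedBall (f (y + l[n])) ρ else ∅ with hc
  have hdiam2 : ∀ n, EMetric.diam (c n) ≤ ENNReal.ofReal (2*ρ) := by
    intro n
    by_cases h : n < l.length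
    · have hcn : c n = closedBall (f (y + l[n])) ρ := dif_pos h
      rw [hcn]
      apply Metric.ediam_le_of_forall_dist_le
      intro x₁ h₁ x₂ h₂
      calc dist x₁ x₂ ≤ dist x₁ (f (y + l[n])) + dist (f (y + l[n])) x₂ := dist_triangle _ _ _
        _ ≤ ρ + ρ := add_le_add h₁ (mem_closedBall'.1 h₂)
        _ = 2*ρ := by ring
    · have hcn : c n = ∅ := dif_neg h
      rw [hcn, show EMetric.diam (∅ : Set (Fin m → ℝ)) = 0 from Metric.ediam_empty]
      exact zero_le
  have hcover : f '' closedBall y δ ⊆ ⋃ n, c n := by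
    rintro _ ⟨x, hx, rfl⟩
    set w := x - y with hw
    have hwδ : ‖w‖ ≤ δ := by rwa [mem_closedBall, dist_eq_norm] at hx
    set t := w j with ht
    have htδ : |t| ≤ δ := le_trans (by simpa [Real.norm_eq_abs] using norm_le_pi_norm w j) hwδ
    set p := w - t • u with hp
    have hpj : p j = 0 := by simp [hp, huj, ht]
    have hpnorm : ‖p‖ ≤ 2*cu*δ := by
      calc ‖p‖ ≤ ‖w‖ + ‖t • u‖ := norm_sub_le _ _
        _ = ‖w‖ + |t| * cu := by rw [norm_smul, Real.norm_eq_abs]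
        _ ≤ δ + δ * cu := by
            have := mul_le_mul_of_nonneg_right htδ hcupos.le
            linarith
        _ ≤ 2*cu*δ := by
            have h2 := mul_le_mul_of_nonneg_right hcu1 hδpos.le
            linarith
    obtain ⟨g, hgG, hgp⟩ := hGcov p hpnorm hpj
    have hgnorm : ‖g‖ ≤ 4*cu*δ := by
      calc ‖g‖ = ‖p - (p - g)‖ := by rw [sub_sub_cancel]
        _ ≤ ‖p‖ + ‖p - g‖ := norm_sub_le _ _
        _ ≤ 2*cu*δ + 2*(ε₁*δ) := add_le_add hpnorm hgp
        _ ≤ 4*cu*δ := by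
            have h2 := mul_le_mul_of_nonneg_right hε₁cu hδpos.le
            have h3 := mul_le_mul_of_nonneg_right hcu1 hδpos.le
            linarith
    have key1 : ‖f x - f (y + (t • u + g))‖ ≤ Kr * (2*(ε₁*δ)) := by
      have hdist := hf.dist_le_mul x (y + (t • u + g))
      rw [dist_eq_norm, dist_eq_norm] at hdist
      have hxe : x - (y + (t • u + g)) = p - g := by
        simp only [hp, hw]; abel
      calc ‖f x - f (y + (t • u + g))‖ ≤ Kr * ‖x - (y + (t • u + g))‖ := hdist
        _ = Kr * ‖p - g‖ := by rw [hxe]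
        _ ≤ Kr * (2*(ε₁*δ)) := by
            apply mul_le_mul_of_nonneg_left hgp hKr0
    have key2 : ‖f (y + (t • u + g)) - f (y + g)‖ ≤ 9*cu*ε₁*δ := by
      set a := y + g with ha
      set b := y + (t • u + g) with hb
      have hay : a - y = g := by simp [ha]
      have hby : b - y = t • u + g := by simp [hb]
      have hanorm : ‖a - y‖ ≤ 4*cu*δ := by rw [hay]; exact hgnorm
      have hbnorm : ‖b - y‖ ≤ 5*cu*δ := by
        rw [hby]
        calc ‖t • u + g‖ ≤ ‖t • u‖ + ‖g‖ := norm_add_le _ _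
          _ ≤ δ * cu + 4*cu*δ := by
              rw [norm_smul, Real.norm_eq_abs]
              exact add_le_add (mul_le_mul_of_nonneg_right htδ hcupos.le) hgnorm
          _ = 5*cu*δ := by ring
      have hLab : L (b - y) = L (a - y) := by
        rw [hay, hby, map_add, _root_.map_smul, hLu, smul_zero, zero_add]
      have esta : ‖f a - f y - L (a - y)‖ ≤ ε₁ * ‖a - y‖ := by
        apply hδ₁
        rw [dist_eq_norm]
        calc ‖a - y‖ ≤ 4*cu*δ := hanorm
          _ < 6*cu*δ := by
              have h2 := mul_pos hcupos hδpos
              linarith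
          _ ≤ δ₁ := hδ6
      have estb : ‖f b - f y - L (b - y)‖ ≤ ε₁ * ‖b - y‖ := by
        apply hδ₁
        rw [dist_eq_norm]
        calc ‖b - y‖ ≤ 5*cu*δ := hbnorm
          _ < 6*cu*δ := by
              have h2 := mul_pos hcupos hδpos
              linarith
          _ ≤ δ₁ := hδ6
      calc ‖f b - f a‖
          = ‖(f b - f y - L (b - y)) - (f a - f y - L (a - y))‖ := by
            rw [hLab]; congr 1; abel
        _ ≤ ‖f b - f y - L (b - y)‖ + ‖f a - f y - L (a - y)‖ := norm_sub_le _ _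
        _ ≤ ε₁ * ‖b - y‖ + ε₁ * ‖a - y‖ := add_le_add estb esta
        _ ≤ ε₁ * (5*cu*δ) + ε₁ * (4*cu*δ) := by
            exact add_le_add (mul_le_mul_of_nonneg_left hbnorm hε₁pos.le)
              (mul_le_mul_of_nonneg_left hanorm hε₁pos.le)
        _ = 9*cu*ε₁*δ := by ring
    have htotal : dist (f x) (f (y + g)) ≤ ρ := by
      rw [dist_eq_norm]
      calc ‖f x - f (y + g)‖
          ≤ ‖f x - f (y + (t • u + g))‖ + ‖f (y + (t • u + g)) - f (y + g)‖ := by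
            have : f x - f (y + g) = (f x - f (y + (t • u + g))) + (f (y + (t • u + g)) - f (y + g)) := by abel
            rw [this]; exact norm_add_le _ _
        _ ≤ Kr * (2*(ε₁*δ)) + 9*cu*ε₁*δ := add_le_add key1 key2
        _ = ρ := by rw [hρ, hC1]; ring
    obtain ⟨n, hn, hln⟩ := List.mem_iff_getElem.1 (Finset.mem_toList.2 hgG)
    apply mem_iUnion.2 ⟨n, ?_⟩
    have hcn : c n = closedBall (f (y + l[n])) ρ := dif_pos hn
    rw [hcn, mem_closedBall, hln]
    exact htotal
  refine ⟨c, hcover, ?_, ?_⟩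
  · intro n
    refine (hdiam2 n).trans (ENNReal.ofReal_le_ofReal ?_)
    calc 2*ρ = (2*C1*ε₁)*δ := by rw [hρ]; ring
      _ ≤ ε*δ := mul_le_mul_of_nonneg_right hε₁a hδpos.le
  · have hspos : (0:ℝ) < (s:ℝ) := by exact_mod_cast lt_of_lt_of_le one_pos hs
    have hzero : ∀ n ∉ Finset.range l.length, EMetric.diam (c n) ^ (s:ℝ) = 0 := by
      intro n hn
      rw [Finset.mem_range, not_lt] at hn
      have hcn : c n = ∅ := dif_neg (not_lt.2 hn)
      rw [hcn, show EMetric.diam (∅ : Set (Fin m → ℝ)) = 0 from Metric.ediam_empty, ENNReal.zero_rpow_of_pos hspos]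
    rw [tsum_eq_sum hzero]
    have hle : ∀ n ∈ Finset.range l.length,
        EMetric.diam (c n) ^ (s:ℝ) ≤ (ENNReal.ofReal (2*ρ)) ^ (s:ℝ) := fun n _ =>
      ENNReal.rpow_le_rpow (hdiam2 n) hspos.le
    calc ∑ n ∈ Finset.range l.length, EMetric.diam (c n) ^ (s:ℝ)
        ≤ ∑ _n ∈ Finset.range l.length, (ENNReal.ofReal (2*ρ)) ^ (s:ℝ) :=
          Finset.sum_le_sum hle
      _ = (l.length : ℝ≥0∞) * (ENNReal.ofReal (2*ρ)) ^ (s:ℝ) := by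
          rw [Finset.sum_const, Finset.card_range, nsmul_eq_mul]
      _ ≤ ENNReal.ofReal ε * volume (closedBall y δ) := by
          rw [Real.volume_pi_closedBall y hδpos.le, Fintype.card_fin]
          have h2ρ : (0:ℝ) ≤ 2*ρ := by linarith
          rw [ENNReal.ofReal_rpow_of_nonneg h2ρ hspos.le]
          rw [show ((l.length : ℝ≥0∞)) = ENNReal.ofReal (l.length : ℝ) by
            rw [ENNReal.ofReal_natCast]]
          rw [← ENNReal.ofReal_mul (Nat.cast_nonneg _), ← ENNReal.ofReal_mul hε.le]
          apply ENNReal.ofReal_le_ofReal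
          rw [Real.rpow_natCast]
          -- now a real inequality
          have hlen : (l.length : ℝ) = (G.card : ℝ) := by
            rw [hl, Finset.length_toList]
          rw [hlen]
          have hcard : (G.card : ℝ) ≤ ((⌈(2*cu*δ)/(ε₁*δ)⌉₊ + 1 : ℕ) : ℝ)^(s-1) := by
            exact_mod_cast Nat.cast_le.2 hGcard
          have hquot : (2*cu*δ)/(ε₁*δ) = 2*cu/ε₁ := by
            rw [mul_div_mul_right _ _ hδpos.ne']
          have hx2 : (2:ℝ) ≤ 2*cu/ε₁ := by
            rw [le_div_iff₀ hε₁pos]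
            linarith
          have hceil : ((⌈(2*cu*δ)/(ε₁*δ)⌉₊ + 1 : ℕ) : ℝ) ≤ 4*cu/ε₁ := by
            rw [hquot]
            push_cast
            have h1 : (⌈2*cu/ε₁⌉₊ : ℝ) < 2*cu/ε₁ + 1 :=
              Nat.ceil_lt_add_one (div_nonneg (by linarith) hε₁pos.le)
            have : 4*cu/ε₁ = 2*(2*cu/ε₁) := by ring
            rw [this]
            linarith
          have hcard2 : (G.card : ℝ) ≤ (4*cu/ε₁)^(s-1) := by
            refine hcard.trans (pow_le_pow_left₀ (Nat.cast_nonneg _) hceil _)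
          have hkey : (4*cu/ε₁)^(s-1) * (2*C1*ε₁)^s ≤ ε * 2^s := by
            have hss : s - 1 + 1 = s := Nat.sub_add_cancel hs
            have hexp : (2*C1*ε₁)^s = (2*C1)^s * (ε₁^(s-1) * ε₁) := by
              rw [mul_pow, ← pow_succ, hss]
            have hdivp : (4*cu/ε₁)^(s-1) = (4*cu)^(s-1) / ε₁^(s-1) := div_pow _ _ _
            rw [hexp, hdivp]
            have hε₁s : (0:ℝ) < ε₁^(s-1) := pow_pos hε₁pos _
            have heq : (4*cu)^(s-1) / ε₁^(s-1) * ((2*C1)^s * (ε₁^(s-1) * ε₁)) = C2 * ε₁ := by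
              rw [hC2]; field_simp
            rw [heq]
            exact hε₁c
          calc (G.card : ℝ) * (2*ρ)^s ≤ (4*cu/ε₁)^(s-1) * (2*ρ)^s := by
                apply mul_le_mul_of_nonneg_right hcard2 (pow_nonneg (by linarith) _)
            _ = (4*cu/ε₁)^(s-1) * ((2*C1*ε₁)^s * δ^s) := by
                rw [hρ]
                rw [show 2*(C1*ε₁*δ) = (2*C1*ε₁)*δ by ring, mul_pow]
            _ = ((4*cu/ε₁)^(s-1) * (2*C1*ε₁)^s) * δ^s := by ring
            _ ≤ (ε * 2^s) * δ^s := by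
                apply mul_le_mul_of_nonneg_right hkey (pow_nonneg hδpos.le _)
            _ = ε * (2*δ)^s := by rw [mul_pow]; ring

lemma sard {s m : ℕ} (hs : 1 ≤ s) {f : (Fin s → ℝ) → (Fin m → ℝ)} {K : ℝ≥0}
    (hf : LipschitzWith K f) :
    μH[(s:ℝ)] (f '' {y | ∃ L : (Fin s → ℝ) →L[ℝ] (Fin m → ℝ),
      HasFDerivAt f L y ∧ ¬ Function.Injective L}) = 0 := by
  set D := {y | ∃ L : (Fin s → ℝ) →L[ℝ] (Fin m → ℝ),
      HasFDerivAt f L y ∧ ¬ Function.Injective L} with hD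
  have main : ∀ R : ℕ, μH[(s:ℝ)] (f '' (D ∩ closedBall 0 R)) = 0 := by
    intro R
    set V := volume (closedBall (0 : Fin s → ℝ) (R+1)) with hV
    have hVfin : V ≠ ⊤ := measure_closedBall_lt_top.ne
    have key : ∀ ε : ℝ, 0 < ε → μH[(s:ℝ)] (f '' (D ∩ closedBall 0 R)) ≤
        ENNReal.ofReal ε * V := by
      intro ε hε
      -- per-point slab data
      have hpt : ∀ y : Fin s → ℝ, ∃ δ₀ : ℝ, 0 < δ₀ ∧ ∀ δ : ℝ, 0 < δ → δ ≤ δ₀ → y ∈ D →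
          ∃ c : ℕ → Set (Fin m → ℝ),
            (f '' closedBall y δ ⊆ ⋃ n, c n) ∧
            (∀ n, EMetric.diam (c n) ≤ ENNReal.ofReal (ε * δ)) ∧
            (∑' n, EMetric.diam (c n) ^ (s:ℝ)) ≤ ENNReal.ofReal ε * volume (closedBall y δ) := by
        intro y
        by_cases hy : y ∈ D
        · obtain ⟨L, hL, hLinj⟩ := hy
          obtain ⟨δ₀, hδ₀, H⟩ := slab_cover hs hf hL hLinj hε (fun j => grid_cover s j)
          exact ⟨δ₀, hδ₀, fun δ h1 h2 _ => H δ h1 h2⟩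
        · exact ⟨1, one_pos, fun δ _ _ hy' => absurd hy' hy⟩
      choose δ₀ hδ₀pos hδ₀ using hpt
      -- cover choice
      have hcovex : ∀ (x : Fin s → ℝ) (δ : ℝ), ∃ c : ℕ → Set (Fin m → ℝ),
          x ∈ D → 0 < δ → δ ≤ δ₀ x →
          ((f '' closedBall x δ ⊆ ⋃ n, c n) ∧
          (∀ n, EMetric.diam (c n) ≤ ENNReal.ofReal (ε * δ)) ∧
          (∑' n, EMetric.diam (c n) ^ (s:ℝ)) ≤ ENNReal.ofReal ε * volume (closedBall x δ)) := by
        intro x δ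
        by_cases h : x ∈ D ∧ 0 < δ ∧ δ ≤ δ₀ x
        · obtain ⟨c, h1, h2, h3⟩ := hδ₀ x δ h.2.1 h.2.2 h.1
          exact ⟨c, fun _ _ _ => ⟨h1, h2, h3⟩⟩
        · exact ⟨fun _ => ∅, fun h1 h2 h3 => absurd ⟨h1, h2, h3⟩ h⟩
      choose cov hcov using hcovex
      -- Besicovitch coverings at scale 1/(n+1)
      have hball : ∀ n : ℕ, ∃ (t : Set (Fin s → ℝ)) (r : (Fin s → ℝ) → ℝ),
          t.Countable ∧ t ⊆ D ∩ closedBall 0 R ∧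
          (∀ x ∈ t, r x ∈ Ioo (0:ℝ) (min (δ₀ x) (1/(n+1))) ∩ Ioo (0:ℝ) 1) ∧
          volume ((D ∩ closedBall 0 R) \ ⋃ x ∈ t, closedBall x (r x)) = 0 ∧
          t.PairwiseDisjoint fun x => closedBall x (r x) := by
        intro n
        apply Besicovitch.exists_disjoint_closedBall_covering_ae volume
          (fun x => Ioo (0:ℝ) (min (δ₀ x) (1/(n+1)))) _ ?_ (fun _ => 1) (fun x _ => one_pos)
        intro x _ δ hδ
        have hm : (0:ℝ) < min (min (δ₀ x) (1/(n+1))) δ := by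
          apply lt_min (lt_min (hδ₀pos x) (by positivity)) hδ
        refine ⟨min (min (δ₀ x) (1/(n+1))) δ / 2, ⟨?_, ?_⟩⟩
        · constructor
          · linarith
          · calc min (min (δ₀ x) (1/(n+1))) δ / 2 < min (min (δ₀ x) (1/(n+1))) δ := by linarith
              _ ≤ min (δ₀ x) (1/(n+1)) := min_le_left _ _
        · constructor
          · linarith
          · calc min (min (δ₀ x) (1/(n+1))) δ / 2 < min (min (δ₀ x) (1/(n+1))) δ := by linarith
              _ ≤ δ := min_le_right _ _
      choose t rr ht_count ht_sub ht_mem ht_null ht_disj using hball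
      -- countability instances
      haveI : ∀ n : ℕ, Countable ↥(t n) := fun n => (ht_count n).to_subtype
      set Bad := ⋃ n : ℕ, f '' ((D ∩ closedBall 0 R) \ ⋃ x ∈ t n, closedBall x (rr n x))
        with hBadDef
      have hBad : μH[(s:ℝ)] Bad = 0 :=
        measure_iUnion_null fun n => image_null hf (ht_null n)
      -- facts about chosen radii
      have hrr : ∀ n (x : Fin s → ℝ), x ∈ t n →
          x ∈ D ∧ 0 < rr n x ∧ rr n x ≤ δ₀ x ∧ rr n x ≤ 1/(n+1) ∧ rr n x ≤ 1 := by
        intro n x hx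
        obtain ⟨⟨h1, h2⟩, ⟨h3, h4⟩⟩ := ht_mem n x hx
        refine ⟨((ht_sub n) hx).1, h1, ?_, ?_, h4.le⟩
        · exact le_trans h2.le (min_le_left _ _)
        · exact le_trans h2.le (min_le_right _ _)
      -- the main estimate via liminf covers
      have hmain : μH[(s:ℝ)] (f '' (D ∩ closedBall 0 R) \ Bad) ≤ ENNReal.ofReal ε * V := by
        have hle := Measure.hausdorffMeasure_le_liminf_tsum (s:ℝ) (f '' (D ∩ closedBall 0 R) \ Bad)
          (l := atTop) (fun n : ℕ => ENNReal.ofReal (ε * (1/(n+1))))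
          ?_ (fun n (p : ↥(t n) × ℕ) => cov (p.1 : Fin s → ℝ) (rr n p.1) p.2) ?_ ?_
        · refine hle.trans ?_
          have hterm : ∀ n : ℕ, (∑' (p : ↥(t n) × ℕ),
              EMetric.diam (cov (p.1 : Fin s → ℝ) (rr n p.1) p.2) ^ (s:ℝ)) ≤
              ENNReal.ofReal ε * V := by
            intro n
            rw [ENNReal.tsum_prod (f := fun (x : ↥(t n)) (k : ℕ) => EMetric.diam (cov (x : Fin s → ℝ) (rr n x) k) ^ (s:ℝ))]
            calc ∑' (x : ↥(t n)), ∑' (k : ℕ),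
                  EMetric.diam (cov (x : Fin s → ℝ) (rr n x) k) ^ (s:ℝ)
                ≤ ∑' (x : ↥(t n)), ENNReal.ofReal ε * volume (closedBall (x : Fin s → ℝ) (rr n x)) := by
                  apply ENNReal.tsum_le_tsum
                  intro x
                  obtain ⟨h1, h2, h3, _, _⟩ := hrr n x x.2
                  exact (hcov (x : Fin s → ℝ) (rr n x) h1 h2 h3).2.2
              _ = ENNReal.ofReal ε * ∑' (x : ↥(t n)), volume (closedBall (x : Fin s → ℝ) (rr n x)) :=
                  ENNReal.tsum_mul_left
              _ ≤ ENNReal.ofReal ε * V := by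
                  apply mul_le_mul_right ?_ _
                  rw [← measure_biUnion (ht_count n) (ht_disj n)
                    (fun x _ => measurableSet_closedBall)]
                  apply measure_mono
                  intro z hz
                  rw [mem_iUnion₂] at hz
                  obtain ⟨x, hxt, hz⟩ := hz
                  obtain ⟨_, _, _, _, h5⟩ := hrr n x hxt
                  have hxR : ‖x‖ ≤ (R:ℝ) := by
                    have := ((ht_sub n) hxt).2
                    rwa [mem_closedBall, dist_zero_right] at this
                  rw [mem_closedBall, dist_zero_right]
                  calc ‖z‖ ≤ ‖z - x‖ + ‖x‖ := by
                        have := norm_le_insert' z x; linarith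
                    _ ≤ 1 + R := by
                        apply add_le_add ?_ hxR
                        rw [mem_closedBall, dist_eq_norm] at hz
                        linarith
                    _ = R + 1 := by ring
          calc liminf (fun n : ℕ => ∑' (p : ↥(t n) × ℕ),
                EMetric.diam (cov (p.1 : Fin s → ℝ) (rr n p.1) p.2) ^ (s:ℝ)) atTop
              ≤ liminf (fun _n : ℕ => ENNReal.ofReal ε * V) atTop :=
                liminf_le_liminf (Eventually.of_forall hterm)
            _ = ENNReal.ofReal ε * V := liminf_const _
        · -- mesh tends to zero
          have h0 : Tendsto (fun n : ℕ => ε * (1/(n+1))) atTop (𝓝 0) := by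
            simpa using tendsto_one_div_add_atTop_nhds_zero_nat.const_mul ε
          have := ENNReal.tendsto_ofReal h0
          simpa using this
        · -- diameters bounded by mesh
          apply Eventually.of_forall
          rintro n ⟨x, k⟩
          obtain ⟨h1, h2, h3, h4, _⟩ := hrr n x x.2
          calc EMetric.diam (cov (x : Fin s → ℝ) (rr n x) k)
              ≤ ENNReal.ofReal (ε * rr n x) := (hcov (x : Fin s → ℝ) (rr n x) h1 h2 h3).2.1 k
            _ ≤ ENNReal.ofReal (ε * (1/(n+1))) := by
                apply ENNReal.ofReal_le_ofReal
                exact mul_le_mul_of_nonneg_left h4 hε.le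
        · -- covering
          apply Eventually.of_forall
          intro n
          rintro z ⟨⟨x₀, hx₀, rfl⟩, hzB⟩
          have hx₀ball : ∃ x ∈ t n, x₀ ∈ closedBall x (rr n x) := by
            by_contra hcon
            push_neg at hcon
            apply hzB
            rw [hBadDef, mem_iUnion]
            refine ⟨n, mem_image_of_mem f ⟨hx₀, ?_⟩⟩
            rw [mem_iUnion₂]
            push_neg
            exact hcon
          obtain ⟨x, hxt, hx₀x⟩ := hx₀ball
          obtain ⟨h1, h2, h3, _, _⟩ := hrr n x hxt
          have := (hcov x (rr n x) h1 h2 h3).1 (mem_image_of_mem f hx₀x)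
          rw [mem_iUnion] at this
          obtain ⟨k, hk⟩ := this
          exact mem_iUnion.2 ⟨(⟨x, hxt⟩, k), hk⟩
      calc μH[(s:ℝ)] (f '' (D ∩ closedBall 0 R))
          ≤ μH[(s:ℝ)] ((f '' (D ∩ closedBall 0 R) \ Bad) ∪ Bad) :=
            measure_mono (subset_diff_union _ _)
        _ ≤ μH[(s:ℝ)] (f '' (D ∩ closedBall 0 R) \ Bad) + μH[(s:ℝ)] Bad := measure_union_le _ _
        _ ≤ ENNReal.ofReal ε * V + 0 := by rw [hBad]; exact add_le_add_left hmain 0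
        _ = ENNReal.ofReal ε * V := by rw [add_zero]
    -- let ε → 0
    have hseq : Tendsto (fun k : ℕ => ENNReal.ofReal (1/(k+1)) * V) atTop (𝓝 0) := by
      have h1 : Tendsto (fun k : ℕ => ENNReal.ofReal (1/(k+1))) atTop (𝓝 0) := by
        have := ENNReal.tendsto_ofReal tendsto_one_div_add_atTop_nhds_zero_nat
        simpa using this
      simpa using ENNReal.Tendsto.mul_const h1 (Or.inr hVfin)
    have hle : ∀ k : ℕ, μH[(s:ℝ)] (f '' (D ∩ closedBall 0 R)) ≤ ENNReal.ofReal (1/(k+1)) * V :=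
      fun k => key _ (by positivity)
    have := ge_of_tendsto hseq (Eventually.of_forall hle)
    exact le_antisymm this zero_le
  have hDcover : D = ⋃ R : ℕ, D ∩ closedBall 0 R := by
    ext y
    simp only [mem_iUnion, mem_inter_iff]
    constructor
    · intro hy
      obtain ⟨R, hR⟩ := exists_nat_ge ‖y‖
      exact ⟨R, hy, by rwa [mem_closedBall, dist_zero_right]⟩
    · rintro ⟨R, hy, _⟩; exact hy
  rw [hDcover, image_iUnion]
  exact measure_iUnion_null fun R => main R

lemma density_contra {s m : ℕ} (hs : 1 ≤ s) {f : (Fin s → ℝ) → (Fin m → ℝ)}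
    {A : Set (Fin m → ℝ)} {y : Fin s → ℝ}
    (hP : Tendsto (fun ρ => volume ((f ⁻¹' A) ∩ closedBall y ρ) / volume (closedBall y ρ))
      (𝓝[>] 0) (𝓝 1))
    (hdiff : DifferentiableAt ℝ f y) (hinj : Function.Injective (fderiv ℝ f y))
    (r : ℕ → ℝ) (hrpos : ∀ n, 0 < r n) (hrlim : Tendsto r atTop (𝓝 0))
    (hgap : ∀ n, A ∩ ball (f y) (2 * r n) = A ∩ ball (f y) (r n)) : False := by
  classical
  set Y : Set (Fin s → ℝ) := f ⁻¹' A with hY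
  set L := fderiv ℝ f y with hLdef
  have hd : HasFDerivAt f L y := hdiff.hasFDerivAt
  -- antilipschitz constant
  obtain ⟨c, hcpos, hc⟩ := LinearMap.exists_antilipschitzWith (L : (Fin s → ℝ) →ₗ[ℝ] (Fin m → ℝ))
    (LinearMap.ker_eq_bot.2 hinj)
  set cr : ℝ := (c : ℝ) with hcr
  have hcrpos : (0:ℝ) < cr := hcpos
  have hanti : ∀ w, ‖w‖ ≤ cr * ‖L w‖ := by
    intro w
    have h := hc.le_mul_dist w 0
    simpa [dist_eq_norm, map_zero] using h
  -- derivative estimate with ε₁ = 1/(6 cr)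
  set ε₁ : ℝ := 1/(6*cr) with hε₁
  have hε₁pos : 0 < ε₁ := by rw [hε₁]; positivity
  have hlo : ∀ᶠ z in 𝓝 y, ‖f z - f y - L (z - y)‖ ≤ ε₁ * ‖z - y‖ := by
    have h := hd.isLittleO
    simpa using Asymptotics.isLittleO_iff.1 h hε₁pos
  obtain ⟨δ₁, hδ₁pos, hδ₁⟩ := Metric.eventually_nhds_iff.1 hlo
  -- the unit sublevel set of L
  set W₁ : Set (Fin s → ℝ) := {w | ‖L w‖ ≤ 1} with hW₁
  set v := volume W₁ with hv
  have hmeas₁ : ∀ τ : ℝ, MeasurableSet {w : Fin s → ℝ | ‖L w‖ ≤ τ} :=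
    fun τ => (isClosed_le (L.continuous.norm) continuous_const).measurableSet
  have hWsub : ∀ τ : ℝ, 0 < τ → {w : Fin s → ℝ | ‖L w‖ ≤ τ} ⊆ closedBall 0 (cr * τ) := by
    intro τ hτ w hw
    rw [mem_closedBall, dist_zero_right]
    calc ‖w‖ ≤ cr * ‖L w‖ := hanti w
      _ ≤ cr * τ := mul_le_mul_of_nonneg_left hw hcrpos.le
  have hvfin : v ≠ ⊤ := by
    rw [hv]
    exact ((measure_mono (hWsub 1 one_pos)).trans_lt measure_closedBall_lt_top).ne
  have hvpos : 0 < v := by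
    rw [hv]
    have hb : (0:ℝ) < (‖L‖ + 1)⁻¹ := by positivity
    refine lt_of_lt_of_le (measure_closedBall_pos volume (0 : Fin s → ℝ) hb) (measure_mono ?_)
    intro w hw
    rw [mem_closedBall, dist_zero_right] at hw
    rw [hW₁, mem_setOf_eq]
    calc ‖L w‖ ≤ ‖L‖ * ‖w‖ := L.le_opNorm w
      _ ≤ ‖L‖ * (‖L‖ + 1)⁻¹ := mul_le_mul_of_nonneg_left hw (norm_nonneg _)
      _ ≤ 1 := by
          rw [mul_inv_le_iff₀ (by positivity)]
          linarith
  have hscale : ∀ τ : ℝ, 0 < τ → volume {w : Fin s → ℝ | ‖L w‖ ≤ τ}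
      = ENNReal.ofReal (τ^s) * v := by
    intro τ hτ
    have hset : {w : Fin s → ℝ | ‖L w‖ ≤ τ} = τ • W₁ := by
      ext w
      rw [mem_smul_set_iff_inv_smul_mem₀ hτ.ne']
      simp only [hW₁, mem_setOf_eq, _root_.map_smul, norm_smul, norm_inv, Real.norm_eq_abs,
        abs_of_pos hτ]
      rw [inv_mul_le_iff₀ hτ]
      simp [mul_comm]
    rw [hset, Measure.addHaar_smul_of_nonneg volume hτ.le, Module.finrank_fin_fun]
  -- real constants
  set w₂ : ℝ := (3/2:ℝ)^s with hw₂
  set w₁ : ℝ := (5/4:ℝ)^s with hw₁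
  have hw12 : w₁ < w₂ := by
    apply pow_lt_pow_left₀ (by norm_num) (by norm_num)
    omega
  set vr : ℝ := v.toReal with hvr
  have hvrpos : 0 < vr := ENNReal.toReal_pos hvpos.ne' hvfin
  set γ : ℝ := (w₂ - w₁) * vr with hγ
  have hγpos : 0 < γ := mul_pos (by linarith) hvrpos
  set β : ℝ := (3*cr)^s with hβ
  have hβpos : 0 < β := by positivity
  -- radii
  set ρ : ℕ → ℝ := fun n => (3/2) * cr * r n with hρdef
  have hρn : ∀ n, ρ n = (3/2) * cr * r n := fun _ => rfl
  have hρpos : ∀ n, 0 < ρ n := fun n => by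
    have := hrpos n
    rw [hρn n]
    nlinarith
  have hρlim : Tendsto ρ atTop (𝓝 0) := by
    have h := hrlim.const_mul ((3/2) * cr)
    rw [mul_zero] at h
    exact h
  -- the forbidden annuli
  set W : ℕ → Set (Fin s → ℝ) := fun n =>
    {w | ‖L w‖ ≤ (3/2) * r n} \ {w | ‖L w‖ ≤ (5/4) * r n} with hWdef
  have hWn : ∀ n, W n = {w | ‖L w‖ ≤ (3/2) * r n} \ {w | ‖L w‖ ≤ (5/4) * r n} := fun _ => rfl
  have hWmeas : ∀ n, MeasurableSet (W n) := fun n => (hmeas₁ _).diff (hmeas₁ _)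
  have hWvol : ∀ n, volume (W n) = ENNReal.ofReal (γ * (r n)^s) := by
    intro n
    have hsub : {w : Fin s → ℝ | ‖L w‖ ≤ (5/4) * r n} ⊆ {w | ‖L w‖ ≤ (3/2) * r n} := by
      intro w hw
      rw [mem_setOf_eq] at hw ⊢
      have := hrpos n
      linarith
    have hr0 : (0:ℝ) < r n := hrpos n
    rw [hWn n]
    rw [measure_diff hsub (hmeas₁ _).nullMeasurableSet ?_]
    · rw [hscale _ (by linarith), hscale _ (by linarith)]
      have hv' : v = ENNReal.ofReal vr := (ENNReal.ofReal_toReal hvfin).symm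
      have h32 : (0:ℝ) ≤ ((3/2) * r n)^s := pow_nonneg (by linarith) s
      have h54 : (0:ℝ) ≤ ((5/4) * r n)^s := pow_nonneg (by linarith) s
      rw [hv', ← ENNReal.ofReal_mul h32, ← ENNReal.ofReal_mul h54,
        ← ENNReal.ofReal_sub _ (mul_nonneg h54 hvrpos.le)]
      congr 1
      rw [hγ, hw₂, hw₁, mul_pow ((3:ℝ)/2) (r n) s, mul_pow ((5:ℝ)/4) (r n) s]
      ring
    · rw [hscale _ (by linarith)]
      exact ENNReal.mul_ne_top ENNReal.ofReal_ne_top hvfin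
  have hWball : ∀ n, W n ⊆ closedBall 0 (ρ n) := by
    intro n w hw
    rw [hWn n] at hw
    obtain ⟨hw1, _⟩ := hw
    rw [mem_setOf_eq] at hw1
    rw [mem_closedBall, dist_zero_right]
    calc ‖w‖ ≤ cr * ‖L w‖ := hanti w
      _ ≤ cr * ((3/2) * r n) := mul_le_mul_of_nonneg_left hw1 hcrpos.le
      _ = ρ n := by rw [hρn n]; ring
  -- forbidden translated sets
  set T : ℕ → Set (Fin s → ℝ) := fun n => (fun z => -y + z) ⁻¹' (W n) with hTdef
  have hTn : ∀ n, T n = (fun z => -y + z) ⁻¹' (W n) := fun _ => rfl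
  have hTmeas : ∀ n, MeasurableSet (T n) := fun n => (hWmeas n).preimage (measurable_const_add _)
  have hTvol : ∀ n, volume (T n) = volume (W n) := fun n => measure_preimage_add volume _ _
  have hTball : ∀ n, T n ⊆ closedBall y (ρ n) := by
    intro n z hz
    have := hWball n hz
    rw [mem_closedBall, dist_zero_right] at this
    rw [mem_closedBall, dist_eq_norm]
    calc ‖z - y‖ = ‖-y + z‖ := by rw [neg_add_eq_sub]
      _ ≤ ρ n := this
  -- points of T n are not in Y, provided ρ n < δ₁
  have hTnotY : ∀ n, ρ n < δ₁ → ∀ z ∈ T n, z ∉ Y := by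
    intro n hρδ z hzT hzY
    set w := z - y with hwdef
    have hwW : w ∈ W n := by
      have heq : -y + z = w := by rw [hwdef, neg_add_eq_sub]
      rw [hTn n] at hzT
      rwa [mem_preimage, heq] at hzT
    rw [hWn n] at hwW
    obtain ⟨hw1, hw2⟩ := hwW
    rw [mem_setOf_eq] at hw1
    rw [mem_setOf_eq] at hw2
    push_neg at hw2
    have hwnorm : ‖w‖ ≤ ρ n := by
      have hmem : w ∈ W n := by
        rw [hWn n]
        exact ⟨hw1, fun h => absurd h (not_le.2 hw2)⟩
      have := hWball n hmem
      rwa [mem_closedBall, dist_zero_right] at this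
    have hder : ‖f z - f y - L w‖ ≤ ε₁ * ‖w‖ := by
      apply hδ₁
      rw [dist_eq_norm]
      exact lt_of_le_of_lt hwnorm hρδ
    have hquarter : ε₁ * ‖w‖ ≤ r n / 4 := by
      calc ε₁ * ‖w‖ ≤ ε₁ * ρ n := mul_le_mul_of_nonneg_left hwnorm hε₁pos.le
        _ = r n / 4 := by
            rw [hε₁, hρn n]
            field_simp
            ring
    have hLw : L w = L (z - y) := by rw [hwdef]
    -- bounds on dist (f z) (f y)
    have hup : dist (f z) (f y) < 2 * r n := by
      rw [dist_eq_norm]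
      have h1 : ‖f z - f y‖ ≤ ‖L w‖ + ε₁ * ‖w‖ := by
        have h2 : ‖f z - f y‖ - ‖L w‖ ≤ ‖f z - f y - L w‖ := by
          have := norm_sub_norm_le (f z - f y) (L w)
          linarith
        rw [hLw] at h2 hder ⊢
        linarith [hder]
      have := hrpos n
      calc ‖f z - f y‖ ≤ ‖L w‖ + ε₁ * ‖w‖ := h1
        _ ≤ (3/2) * r n + r n / 4 := add_le_add hw1 hquarter
        _ < 2 * r n := by linarith
    have hlow : r n ≤ dist (f z) (f y) := by
      rw [dist_eq_norm]
      have h2 : ‖L w‖ - ‖f z - f y‖ ≤ ‖f z - f y - L w‖ := by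
        have := norm_sub_norm_le (L w) (f z - f y)
        rw [norm_sub_rev (L w)] at this
        linarith
      have := hrpos n
      linarith [hder, hquarter, hw2]
    -- contradiction with the gap
    have hzA : f z ∈ A := hzY
    have hmem : f z ∈ A ∩ ball (f y) (2 * r n) := ⟨hzA, by rwa [mem_ball]⟩
    rw [hgap n] at hmem
    have : dist (f z) (f y) < r n := hmem.2
    linarith
  -- volume estimate
  have hcB : ∀ n, volume (closedBall y (ρ n)) = ENNReal.ofReal (β * (r n)^s) := by
    intro n
    rw [Real.volume_pi_closedBall y (hρpos n).le, Fintype.card_fin]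
    congr 1
    have h2ρ : 2 * ρ n = (3*cr) * r n := by rw [hρn n]; ring
    rw [h2ρ, mul_pow, hβ]
  set κ : ℝ≥0∞ := ENNReal.ofReal ((β - γ)/β) with hκ
  have hκlt : κ < 1 := by
    rw [hκ]
    apply ENNReal.ofReal_lt_one.2
    rw [div_lt_one hβpos]
    linarith
  have hqbound : ∀ n, ρ n < δ₁ →
      volume (Y ∩ closedBall y (ρ n)) / volume (closedBall y (ρ n)) ≤ κ := by
    intro n hρδ
    have hsub : Y ∩ closedBall y (ρ n) ⊆ closedBall y (ρ n) \ T n := by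
      rintro z ⟨hzY, hzB⟩
      refine ⟨hzB, fun hzT => hTnotY n hρδ z hzT hzY⟩
    have hnum : volume (Y ∩ closedBall y (ρ n)) ≤ ENNReal.ofReal ((β - γ) * (r n)^s) := by
      calc volume (Y ∩ closedBall y (ρ n)) ≤ volume (closedBall y (ρ n) \ T n) :=
            measure_mono hsub
        _ = volume (closedBall y (ρ n)) - volume (T n) := by
            apply measure_diff (hTball n) (hTmeas n).nullMeasurableSet
            rw [hTvol n, hWvol n]
            exact ENNReal.ofReal_ne_top
        _ = ENNReal.ofReal (β * (r n)^s) - ENNReal.ofReal (γ * (r n)^s) := by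
            rw [hcB n, hTvol n, hWvol n]
        _ = ENNReal.ofReal (β * (r n)^s - γ * (r n)^s) := by
            rw [ENNReal.ofReal_sub _ (mul_nonneg hγpos.le (pow_nonneg (hrpos n).le s))]
        _ = ENNReal.ofReal ((β - γ) * (r n)^s) := by congr 1; ring
    calc volume (Y ∩ closedBall y (ρ n)) / volume (closedBall y (ρ n))
        ≤ ENNReal.ofReal ((β - γ) * (r n)^s) / ENNReal.ofReal (β * (r n)^s) := by
          rw [hcB n]
          exact ENNReal.div_le_div_right hnum _
      _ = κ := by
          have hrs : (0:ℝ) < (r n)^s := pow_pos (hrpos n) s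
          rw [← ENNReal.ofReal_div_of_pos (mul_pos hβpos hrs), hκ]
          congr 1
          rw [mul_div_mul_right _ _ hrs.ne']
  -- contradiction via the density limit
  have hρmem : ∀ n, ρ n ∈ Ioi (0:ℝ) := fun n => hρpos n
  have hρtend : Tendsto ρ atTop (𝓝[>] 0) :=
    tendsto_nhdsWithin_iff.2 ⟨hρlim, Eventually.of_forall hρmem⟩
  have hq : Tendsto (fun n => volume (Y ∩ closedBall y (ρ n)) / volume (closedBall y (ρ n)))
      atTop (𝓝 1) := hP.comp hρtend
  have hev : ∀ᶠ n in atTop, volume (Y ∩ closedBall y (ρ n)) / volume (closedBall y (ρ n)) ≤ κ := by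
    filter_upwards [hρlim.eventually_lt_const hδ₁pos] with n hn
    exact hqbound n hn
  have : (1:ℝ≥0∞) ≤ κ := le_of_tendsto hq hev
  exact absurd this (not_le.2 hκlt)

end Stmt14Aux

open Stmt14Aux

/-- `A ⊆ ℝ^m` is `s`-rectifiable: there are countably many Lipschitz maps
`g i : ℝ^s → ℝ^m` whose ranges cover `A` up to an `H^s`-null set. -/
def IsHRectifiable (s : ℕ) {m : ℕ} (A : Set (Fin m → ℝ)) : Prop :=
  ∃ g : ℕ → (Fin s → ℝ) → (Fin m → ℝ),
    (∀ i, ∃ K : ℝ≥0, LipschitzWith K (g i)) ∧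
    μH[(s : ℝ)] (A \ ⋃ i, Set.range (g i)) = 0

/-- If `s ≥ 1`, `A ⊆ ℝ^m` is `H^s`-measurable with `0 < H^s(A) < ∞`, and every
point of `A` admits radii `r_n → 0⁺` with `A ∩ B(x, 2 r_n) = A ∩ B(x, r_n)`,
then `A` is not `s`-rectifiable. -/
theorem stmt14 (s m : ℕ) (hs : 1 ≤ s) (A : Set (Fin m → ℝ))
    (hmeas : NullMeasurableSet A μH[(s : ℝ)])
    (h0 : 0 < μH[(s : ℝ)] A) (hfin : μH[(s : ℝ)] A < ⊤)
    (hr : ∀ x ∈ A, ∃ r : ℕ → ℝ, (∀ n, 0 < r n) ∧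
      Filter.Tendsto r Filter.atTop (nhds 0) ∧
      ∀ n, A ∩ Metric.ball x (2 * r n) = A ∩ Metric.ball x (r n)) :
    ¬ IsHRectifiable s A := by
  rintro ⟨g, hgLip, hgnull⟩
  -- pick a Lipschitz piece carrying positive measure
  have hpos : ∃ i, μH[(s:ℝ)] (A ∩ range (g i)) ≠ 0 := by
    by_contra hcon
    push_neg at hcon
    have hU : μH[(s:ℝ)] (A ∩ ⋃ i, range (g i)) = 0 := by
      rw [inter_iUnion]
      exact measure_iUnion_null hcon
    have hA0 : μH[(s:ℝ)] A = 0 := by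
      have hsplit : A = (A \ ⋃ i, range (g i)) ∪ (A ∩ ⋃ i, range (g i)) :=
        (diff_union_inter A _).symm
      apply le_antisymm ?_ zero_le
      calc μH[(s:ℝ)] A
          ≤ μH[(s:ℝ)] (A \ ⋃ i, range (g i)) + μH[(s:ℝ)] (A ∩ ⋃ i, range (g i)) := by
            nth_rewrite 1 [hsplit]
            exact measure_union_le _ _
        _ = 0 := by rw [hgnull, hU, add_zero]
    exact absurd hA0 h0.ne'
  obtain ⟨i, hi⟩ := hpos
  obtain ⟨K, hK⟩ := hgLip i
  set f := g i with hf
  set Y : Set (Fin s → ℝ) := f ⁻¹' A with hY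
  -- density points
  have hdens := Besicovitch.ae_tendsto_measure_inter_div (volume : Measure (Fin s → ℝ)) Y
  have hZ : (volume.restrict Y) {y : Fin s → ℝ |
      ¬ Tendsto (fun ρ => volume (Y ∩ closedBall y ρ) / volume (closedBall y ρ))
        (𝓝[>] 0) (𝓝 1)} = 0 := ae_iff.1 hdens
  obtain ⟨Z', hZ'sup, hZ'meas, hZ'null⟩ := exists_measurable_superset_of_null hZ
  have hZ'vol : volume (Z' ∩ Y) = 0 := by
    rwa [Measure.restrict_apply hZ'meas] at hZ'null
  -- Rademacher
  have hN₁ : volume {y : Fin s → ℝ | ¬ DifferentiableAt ℝ f y} = 0 :=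
    ae_iff.1 hK.ae_differentiableAt
  set D : Set (Fin s → ℝ) := {y | ∃ L : (Fin s → ℝ) →L[ℝ] (Fin m → ℝ),
    HasFDerivAt f L y ∧ ¬ Function.Injective L} with hD
  by_cases hgood : ∃ y, (Tendsto (fun ρ => volume (Y ∩ closedBall y ρ) / volume (closedBall y ρ))
      (𝓝[>] 0) (𝓝 1)) ∧ y ∈ Y ∧ DifferentiableAt ℝ f y ∧ Function.Injective (fderiv ℝ f y)
  · obtain ⟨y, hPy, hyY, hdiff, hinj⟩ := hgood
    obtain ⟨r, hrpos, hrlim, hgap⟩ := hr (f y) hyY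
    exact density_contra hs hPy hdiff hinj r hrpos hrlim hgap
  · push_neg at hgood
    have hYsub : Y ⊆ (Z' ∩ Y) ∪ ({y | ¬ DifferentiableAt ℝ f y} ∪ D) := by
      intro y hy
      by_cases h1 : Tendsto (fun ρ => volume (Y ∩ closedBall y ρ) / volume (closedBall y ρ))
        (𝓝[>] 0) (𝓝 1)
      · by_cases h2 : DifferentiableAt ℝ f y
        · have h3 := hgood y h1 hy h2
          exact Or.inr (Or.inr ⟨fderiv ℝ f y, h2.hasFDerivAt, h3⟩)
        · exact Or.inr (Or.inl h2)
      · exact Or.inl ⟨hZ'sup h1, hy⟩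
    have hAsub : A ∩ range f ⊆
        f '' (Z' ∩ Y) ∪ (f '' {y | ¬ DifferentiableAt ℝ f y} ∪ f '' D) := by
      rintro a ⟨haA, e, rfl⟩
      have heY : e ∈ Y := haA
      have := hYsub heY
      rcases this with h | h | h
      · exact Or.inl (mem_image_of_mem f h)
      · exact Or.inr (Or.inl (mem_image_of_mem f h))
      · exact Or.inr (Or.inr (mem_image_of_mem f h))
    have hnull : μH[(s:ℝ)] (A ∩ range f) = 0 := by
      apply measure_mono_null hAsub
      apply measure_union_null (image_null hK hZ'vol)
      exact measure_union_null (image_null hK hN₁) (sard hs hK)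
    exact hi hnull
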